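/- Let d ≥ 2 be an integer, let A ⊆ ℝ^d be a closed, convex, nonempty subset of the closed Euclidean unit ball centered at the origin, and let ε ∈ (0, 1). Then there exist an integer N ≤ 2d(1 + 6·ε^{−1/2})^{d−1}, vectors a_1, …, a_N ∈ ℝ^d, and reals b_1, …, b_N such that the intersection of halfspaces P = ⋂_{i=1}^N {y ∈ ℝ^d : ⟨a_i, y⟩ ≤ b_i} satisfies A ⊆ P ⊆ {y ∈ ℝ^d : there exists a ∈ A with ‖y − a‖₂ ≤ ε}, where ‖·‖₂ is the Euclidean norm. -/

import Mathlib

open Metric Set MeasureTheory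
open scoped InnerProductSpace ENNReal

section Aux

variable {E : Type*} [NormedAddCommGroup E] [InnerProductSpace ℝ E]

/-- Firm nonexpansiveness of (abstract) projections onto a set. -/
private lemma aux_dist {K : Set E} {p q y z : E} (hp : p ∈ K) (hq : q ∈ K)
    (hy : ∀ c ∈ K, ⟪y - p, c - p⟫_ℝ ≤ 0) (hz : ∀ c ∈ K, ⟪z - q, c - q⟫_ℝ ≤ 0) :
    ‖p - q‖ ≤ ‖y - z‖ ∧ ‖(y - p) - (z - q)‖ ≤ ‖y - z‖ := by
  have h1 : ⟪y - p, q - p⟫_ℝ ≤ 0 := hy q hq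
  have h2 : ⟪z - q, p - q⟫_ℝ ≤ 0 := hz p hp
  have hpq : ⟪y - p, p - q⟫_ℝ = - ⟪y - p, q - p⟫_ℝ := by
    rw [show p - q = -(q - p) by abel, inner_neg_right]
  have hsum : ⟪y - z, p - q⟫_ℝ = ⟪y - p, p - q⟫_ℝ + ⟪p - q, p - q⟫_ℝ - ⟪z - q, p - q⟫_ℝ := by
    rw [show y - z = ((y - p) + (p - q)) - (z - q) by abel, inner_sub_left, inner_add_left]
  have hself : ⟪p - q, p - q⟫_ℝ = ‖p - q‖ ^ 2 := real_inner_self_eq_norm_sq _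
  have hkey : ‖p - q‖ ^ 2 ≤ ⟪y - z, p - q⟫_ℝ := by
    rw [hsum, hself]; linarith [hpq, h1, h2]
  have hCS : ⟪y - z, p - q⟫_ℝ ≤ ‖y - z‖ * ‖p - q‖ := real_inner_le_norm _ _
  constructor
  · nlinarith [norm_nonneg (p - q), norm_nonneg (y - z)]
  · have e : (y - p) - (z - q) = (y - z) - (p - q) := by abel
    rw [e]
    have hexp : ‖(y - z) - (p - q)‖ ^ 2 = ‖y - z‖ ^ 2 - 2 * ⟪y - z, p - q⟫_ℝ + ‖p - q‖ ^ 2 :=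
      norm_sub_sq_real _ _
    nlinarith [norm_nonneg ((y - z) - (p - q)), norm_nonneg (y - z)]

private lemma aux_geom (d : ℕ) (hd : 1 ≤ d) {t : ℝ} (ht : 1 ≤ t) :
    (t + 1) ^ d - (t - 1) ^ d ≤ 2 * d * (t + 1) ^ (d - 1) := by
  have h := geom_sum₂_mul (t + 1) (t - 1) d
  have h2 : (t + 1) - (t - 1) = 2 := by ring
  have hb : ∀ i ∈ Finset.range d, (t + 1) ^ i * (t - 1) ^ (d - 1 - i) ≤ (t + 1) ^ (d - 1) := by
    intro i hi
    rw [Finset.mem_range] at hi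
    calc (t + 1) ^ i * (t - 1) ^ (d - 1 - i) ≤ (t + 1) ^ i * (t + 1) ^ (d - 1 - i) := by
          apply mul_le_mul_of_nonneg_left (pow_le_pow_left₀ (by linarith) (by linarith) _)
            (by positivity)
      _ = (t + 1) ^ (d - 1) := by rw [← pow_add]; congr 1; omega
  have hs : (∑ i ∈ Finset.range d, (t + 1) ^ i * (t - 1) ^ (d - 1 - i))
      ≤ d * (t + 1) ^ (d - 1) := by
    calc (∑ i ∈ Finset.range d, (t + 1) ^ i * (t - 1) ^ (d - 1 - i))
        ≤ ∑ _i ∈ Finset.range d, (t + 1) ^ (d - 1) := Finset.sum_le_sum hb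
      _ = d * (t + 1) ^ (d - 1) := by rw [Finset.sum_const, Finset.card_range, nsmul_eq_mul]
  calc (t + 1) ^ d - (t - 1) ^ d
      = (∑ i ∈ Finset.range d, (t + 1) ^ i * (t - 1) ^ (d - 1 - i)) * 2 := by rw [← h, h2]
    _ ≤ (d * (t + 1) ^ (d - 1)) * 2 := mul_le_mul_of_nonneg_right hs (by norm_num)
    _ = 2 * d * (t + 1) ^ (d - 1) := by ring

private lemma aux_net {α : Type*} [MetricSpace α] (S : Set α) {δ : ℝ} (hδ : 0 < δ) (M : ℕ)
    (hbound : ∀ F : Finset α, ↑F ⊆ S →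
      ((F : Set α).Pairwise fun p q => δ ≤ dist p q) → F.card ≤ M) :
    ∃ F : Finset α, ↑F ⊆ S ∧ ((F : Set α).Pairwise fun p q => δ ≤ dist p q) ∧
      ∀ v ∈ S, ∃ p ∈ F, dist v p < δ := by
  classical
  set s : Set ℕ := {n | ∃ F : Finset α, ↑F ⊆ S ∧
    ((F : Set α).Pairwise fun p q => δ ≤ dist p q) ∧ F.card = n} with hs
  have hne : s.Nonempty := ⟨0, ∅, by simp, by simp, rfl⟩
  have hbdd : BddAbove s := ⟨M, fun n hn => by
    obtain ⟨F, h1, h2, h3⟩ := hn; exact h3 ▸ hbound F h1 h2⟩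
  obtain ⟨F, hFS, hFsep, hFcard⟩ := Nat.sSup_mem hne hbdd
  refine ⟨F, hFS, hFsep, fun v hv => ?_⟩
  by_contra hcon
  push_neg at hcon
  have hvF : v ∉ F := by
    intro h
    have := hcon v h
    simp only [dist_self] at this
    linarith
  have hmem : (insert v F).card ∈ s := by
    refine ⟨insert v F, ?_, ?_, rfl⟩
    · rw [Finset.coe_insert]; exact Set.insert_subset hv hFS
    · rw [Finset.coe_insert]
      refine hFsep.insert fun q hq _ => ⟨hcon q hq, ?_⟩
      rw [dist_comm]; exact hcon q hq
  have hle := le_csSup hbdd hmem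
  rw [Finset.card_insert_of_notMem hvF, hFcard] at hle
  omega

private lemma aux_card (d : ℕ) (hd : 2 ≤ d) {δ : ℝ} (hδ0 : 0 < δ) (hδ1 : δ ≤ 1)
    (F : Finset (EuclideanSpace ℝ (Fin d)))
    (hFS : ↑F ⊆ sphere (0 : EuclideanSpace ℝ (Fin d)) 2)
    (hFsep : (F : Set (EuclideanSpace ℝ (Fin d))).Pairwise fun p q => δ ≤ dist p q) :
    (F.card : ℝ) ≤ 2 * d * (1 + 4 / δ) ^ (d - 1) := by
  classical
  haveI : Nontrivial (EuclideanSpace ℝ (Fin d)) :=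
    Module.nontrivial_of_finrank_pos (R := ℝ) (by rw [finrank_euclideanSpace_fin]; omega)
  have hrank : Module.finrank ℝ (EuclideanSpace ℝ (Fin d)) = d :=
    finrank_euclideanSpace_fin
  set μ : Measure (EuclideanSpace ℝ (Fin d)) := volume with hμ
  set c := μ (ball (0 : EuclideanSpace ℝ (Fin d)) 1) with hc
  have hc0 : c ≠ 0 := (measure_ball_pos μ 0 one_pos).ne'
  have hctop : c ≠ ⊤ := measure_ball_lt_top.ne
  have hdisj : (F : Set (EuclideanSpace ℝ (Fin d))).PairwiseDisjoint
      fun p => ball p (δ / 2) := fun p hp q hq hpq =>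
    ball_disjoint_ball (by linarith [hFsep hp hq hpq])
  have hmeasU : μ (⋃ p ∈ F, ball p (δ / 2))
      = (F.card : ℝ≥0∞) * (ENNReal.ofReal ((δ / 2) ^ d) * c) := by
    rw [measure_biUnion_finset hdisj fun p _ => measurableSet_ball]
    have hball : ∀ p ∈ F, μ (ball p (δ / 2)) = ENNReal.ofReal ((δ / 2) ^ d) * c := by
      intro p _
      rw [hc, Measure.addHaar_ball μ p (by linarith), hrank]
    rw [Finset.sum_congr rfl hball, Finset.sum_const, nsmul_eq_mul]
  have hdisj2 : Disjoint (⋃ p ∈ F, ball p (δ / 2))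
      (closedBall (0 : EuclideanSpace ℝ (Fin d)) (2 - δ / 2)) := by
    rw [Set.disjoint_left]
    intro z hz hz2
    simp only [Set.mem_iUnion] at hz
    obtain ⟨p, hp, hzp⟩ := hz
    have hp2 : ‖p‖ = 2 := by simpa using mem_sphere_zero_iff_norm.1 (hFS hp)
    rw [mem_ball, dist_eq_norm] at hzp
    rw [mem_closedBall, dist_zero_right] at hz2
    have h1 : ‖p‖ - ‖z‖ ≤ ‖p - z‖ := norm_sub_norm_le p z
    have h2 : ‖p - z‖ = ‖z - p‖ := norm_sub_rev p z
    linarith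
  have hsub2 : (⋃ p ∈ F, ball p (δ / 2)) ∪
      closedBall (0 : EuclideanSpace ℝ (Fin d)) (2 - δ / 2)
      ⊆ ball (0 : EuclideanSpace ℝ (Fin d)) (2 + δ / 2) := by
    intro z hz
    rw [mem_ball, dist_zero_right]
    rcases hz with hz | hz
    · simp only [Set.mem_iUnion] at hz
      obtain ⟨p, hp, hzp⟩ := hz
      have hp2 : ‖p‖ = 2 := by simpa using mem_sphere_zero_iff_norm.1 (hFS hp)
      rw [mem_ball, dist_eq_norm] at hzp
      have h1 : ‖z‖ ≤ ‖z - p‖ + ‖p‖ := by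
        simpa using norm_add_le (z - p) p
      linarith
    · rw [mem_closedBall, dist_zero_right] at hz; linarith
  have hμle : μ ((⋃ p ∈ F, ball p (δ / 2)) ∪
        closedBall (0 : EuclideanSpace ℝ (Fin d)) (2 - δ / 2))
      ≤ μ (ball (0 : EuclideanSpace ℝ (Fin d)) (2 + δ / 2)) := measure_mono hsub2
  have e1 : μ (closedBall (0 : EuclideanSpace ℝ (Fin d)) (2 - δ / 2))
      = ENNReal.ofReal ((2 - δ / 2) ^ d) * c := by
    rw [Measure.addHaar_closedBall μ _ (by linarith : (0:ℝ) ≤ 2 - δ / 2), hrank, ← hc]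
  have e2 : μ (ball (0 : EuclideanSpace ℝ (Fin d)) (2 + δ / 2))
      = ENNReal.ofReal ((2 + δ / 2) ^ d) * c := by
    rw [Measure.addHaar_ball μ _ (by linarith : (0:ℝ) ≤ 2 + δ / 2), hrank, ← hc]
  rw [measure_union hdisj2 measurableSet_closedBall, hmeasU, e1, e2] at hμle
  have hμle2 : ((F.card : ℝ≥0∞) * ENNReal.ofReal ((δ / 2) ^ d)
      + ENNReal.ofReal ((2 - δ / 2) ^ d)) * c ≤ ENNReal.ofReal ((2 + δ / 2) ^ d) * c := by
    calc ((F.card : ℝ≥0∞) * ENNReal.ofReal ((δ / 2) ^ d)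
        + ENNReal.ofReal ((2 - δ / 2) ^ d)) * c
        = (F.card : ℝ≥0∞) * (ENNReal.ofReal ((δ / 2) ^ d) * c)
          + ENNReal.ofReal ((2 - δ / 2) ^ d) * c := by ring
      _ ≤ _ := hμle
  rw [ENNReal.mul_le_mul_iff_left hc0 hctop] at hμle2
  have hreal : (F.card : ℝ) * (δ / 2) ^ d + (2 - δ / 2) ^ d ≤ (2 + δ / 2) ^ d := by
    rw [← ENNReal.ofReal_natCast, ← ENNReal.ofReal_mul (by positivity),
      ← ENNReal.ofReal_add (by positivity) (pow_nonneg (by linarith) _),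
      ENNReal.ofReal_le_ofReal_iff (by positivity)] at hμle2
    exact hμle2
  set t := 4 / δ with ht
  have ht1 : (1 : ℝ) ≤ t := by rw [ht, le_div_iff₀ hδ0]; linarith
  have h1 : (2 + δ / 2) = (δ / 2) * (t + 1) := by rw [ht]; field_simp; ring
  have h2 : (2 - δ / 2) = (δ / 2) * (t - 1) := by rw [ht]; field_simp; ring
  have hfc : (F.card : ℝ) ≤ (t + 1) ^ d - (t - 1) ^ d := by
    have hpow : (0 : ℝ) < (δ / 2) ^ d := by positivity
    rw [h1, h2, mul_pow, mul_pow] at hreal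
    nlinarith [hreal, hpow]
  calc (F.card : ℝ) ≤ (t + 1) ^ d - (t - 1) ^ d := hfc
    _ ≤ 2 * d * (t + 1) ^ (d - 1) := aux_geom d (by omega) ht1
    _ = 2 * d * (1 + 4 / δ) ^ (d - 1) := by rw [ht, add_comm]

end Aux

/-- Dudley's theorem: for `d ≥ 2`, a closed convex nonempty subset `A` of the closed
Euclidean unit ball in `ℝ^d`, and `ε ∈ (0,1)`, there is an intersection `P` of at most
`2d(1 + 6·ε^{−1/2})^{d−1}` closed halfspaces with `A ⊆ P ⊆` (the closed `ε`-offset of `A`). -/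
theorem stmt_14 (d : ℕ) (hd : 2 ≤ d) (A : Set (EuclideanSpace ℝ (Fin d)))
    (hclosed : IsClosed A) (hconv : Convex ℝ A) (hne : A.Nonempty)
    (hsub : A ⊆ Metric.closedBall 0 1) (ε : ℝ) (hε0 : 0 < ε) (hε1 : ε < 1) :
    ∃ (N : ℕ) (a : Fin N → EuclideanSpace ℝ (Fin d)) (b : Fin N → ℝ),
      (N : ℝ) ≤ 2 * d * (1 + 6 / Real.sqrt ε) ^ (d - 1) ∧
      (∀ y ∈ A, ∀ i, (inner ℝ (a i) y : ℝ) ≤ b i) ∧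
      (∀ y : EuclideanSpace ℝ (Fin d), (∀ i, (inner ℝ (a i) y : ℝ) ≤ b i) →
        ∃ z ∈ A, ‖y - z‖ ≤ ε) := by
  classical
  -- the metric projection onto `A`
  have hproj : ∀ y : EuclideanSpace ℝ (Fin d), ∃ p, p ∈ A ∧
      ∀ a ∈ A, ⟪y - p, a - p⟫_ℝ ≤ 0 := by
    intro y
    obtain ⟨p, hp, hmin⟩ := exists_norm_eq_iInf_of_complete_convex hne hclosed.isComplete hconv y
    exact ⟨p, hp, (norm_eq_iInf_iff_real_inner_le_zero hconv hp).1 hmin⟩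
  choose P hPmem hPle using hproj
  have hnorm_le : ∀ a ∈ A, ‖a‖ ≤ 1 := fun a ha => mem_closedBall_zero_iff.1 (hsub ha)
  set s0 := Real.sqrt ε with hs0def
  have hs0 : 0 < s0 := Real.sqrt_pos.2 hε0
  have hs1 : s0 < 1 := by
    rw [hs0def, show (1:ℝ) = Real.sqrt 1 by simp]
    exact Real.sqrt_lt_sqrt hε0.le hε1
  have hssq : s0 ^ 2 = ε := Real.sq_sqrt hε0.le
  set δ := 2 / 3 * s0 with hδdef
  have hδ0 : 0 < δ := by positivity
  have hδ1 : δ ≤ 1 := by rw [hδdef]; nlinarith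
  have hδsq : δ ^ 2 = 4 / 9 * ε := by rw [hδdef, mul_pow, hssq]; ring
  -- the cardinality bound for δ-separated subsets of the sphere of radius 2
  have hcb : ∀ F : Finset (EuclideanSpace ℝ (Fin d)),
      ↑F ⊆ sphere (0 : EuclideanSpace ℝ (Fin d)) 2 →
      ((F : Set (EuclideanSpace ℝ (Fin d))).Pairwise fun p q => δ ≤ dist p q) →
      (F.card : ℝ) ≤ 2 * d * (1 + 6 / s0) ^ (d - 1) := by
    intro F h1 h2
    have hb := aux_card d hd hδ0 hδ1 F h1 h2
    have h46 : 4 / δ = 6 / s0 := by rw [hδdef]; field_simp; ring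
    rwa [h46] at hb
  -- a maximal δ-separated subset of the sphere of radius 2, which is a δ-net
  obtain ⟨F, hFS, hFsep, hFnet⟩ := aux_net (sphere (0 : EuclideanSpace ℝ (Fin d)) 2) hδ0
    (Nat.floor (2 * d * (1 + 6 / s0) ^ (d - 1)))
    (fun F h1 h2 => Nat.le_floor (hcb F h1 h2))
  set e := F.equivFin with hedef
  refine ⟨F.card,
    fun i => ‖(e.symm i : EuclideanSpace ℝ (Fin d)) - P (e.symm i)‖⁻¹ •
      ((e.symm i : EuclideanSpace ℝ (Fin d)) - P (e.symm i)),
    fun i => ⟪‖(e.symm i : EuclideanSpace ℝ (Fin d)) - P (e.symm i)‖⁻¹ •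
      ((e.symm i : EuclideanSpace ℝ (Fin d)) - P (e.symm i)), P (e.symm i)⟫_ℝ, ?_, ?_, ?_⟩
  · exact hcb F hFS hFsep
  · intro y hy i
    set f : EuclideanSpace ℝ (Fin d) := (e.symm i : EuclideanSpace ℝ (Fin d))
    have hv := hPle f y hy
    rw [← sub_nonpos, ← inner_sub_right, real_inner_smul_left]
    exact mul_nonpos_of_nonneg_of_nonpos (by positivity) hv
  · intro y hy
    set x := P y with hxdef
    by_cases htle : ‖y - x‖ ≤ ε
    · exact ⟨x, hPmem y, htle⟩
    push_neg at htle
    have ht0 : 0 < ‖y - x‖ := lt_trans hε0 htle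
    set t := ‖y - x‖ with htdef
    set u := t⁻¹ • (y - x) with hu
    have hun : ‖u‖ = 1 := by
      rw [hu, norm_smul, Real.norm_eq_abs, abs_of_pos (inv_pos.2 ht0), ← htdef]
      field_simp
    have hxnorm : ‖x‖ ≤ 1 := hnorm_le x (hPmem y)
    have huA : ∀ a ∈ A, ⟪u, a - x⟫_ℝ ≤ 0 := fun a ha => by
      rw [hu, real_inner_smul_left]
      exact mul_nonpos_of_nonneg_of_nonpos (by positivity) (hPle y a ha)
    set w := x + u with hw
    have hwx : w - x = u := by rw [hw]; abel
    have hwn : ‖w‖ ≤ 2 := by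
      calc ‖w‖ ≤ ‖x‖ + ‖u‖ := norm_add_le _ _
        _ ≤ 2 := by rw [hun]; linarith
    -- find a point of the sphere of radius 2 whose "shadow" is w
    have hcont : ContinuousOn (fun s : ℝ => ‖w + s • u‖) (Set.Icc 0 4) :=
      (Continuous.norm (continuous_const.add (continuous_id.smul continuous_const))).continuousOn
    have h4 : (2 : ℝ) ∈ Set.Icc ‖w + (0:ℝ) • u‖ ‖w + (4:ℝ) • u‖ := by
      constructor
      · simpa using hwn
      · have h1 : ‖(4:ℝ) • u‖ ≤ ‖w + (4:ℝ) • u‖ + ‖w‖ := by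
          have := norm_sub_le (w + (4:ℝ) • u) w
          simpa using this
        have h2 : ‖(4:ℝ) • u‖ = 4 := by rw [norm_smul, hun]; norm_num
        linarith
    obtain ⟨s, hsmem, hsv⟩ := intermediate_value_Icc (by norm_num : (0:ℝ) ≤ 4) hcont h4
    set v := w + s • u with hv
    have hvs : v ∈ sphere (0 : EuclideanSpace ℝ (Fin d)) 2 :=
      mem_sphere_zero_iff_norm.2 hsv
    obtain ⟨f, hfF, hfv⟩ := hFnet v hvs
    have hf2 : ‖f‖ = 2 := mem_sphere_zero_iff_norm.1 (hFS hfF)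
    set xf := P f with hxf
    have hxfn : ‖xf‖ ≤ 1 := hnorm_le _ (hPmem f)
    set D := ‖f - xf‖ with hD
    have hD1 : 1 ≤ D := by
      have h1 : ‖f‖ - ‖xf‖ ≤ ‖f - xf‖ := norm_sub_norm_le f xf
      rw [hD]; linarith
    have hD0 : (0:ℝ) < D := lt_of_lt_of_le one_pos hD1
    set n := D⁻¹ • (f - xf) with hn
    have hnn : ‖n‖ = 1 := by
      rw [hn, norm_smul, Real.norm_eq_abs, abs_of_pos (inv_pos.2 hD0), ← hD]
      field_simp
    have hnA : ∀ a ∈ A, ⟪n, a - xf⟫_ℝ ≤ 0 := fun a ha => by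
      rw [hn, real_inner_smul_left]
      exact mul_nonpos_of_nonneg_of_nonpos (by positivity) (hPle f a ha)
    set yf := xf + n with hyf
    set C : Set (EuclideanSpace ℝ (Fin d)) := {c | ∃ a ∈ A, ‖c - a‖ ≤ 1} with hC
    have hyfC : yf ∈ C := ⟨xf, hPmem f, by rw [hyf, add_sub_cancel_left, hnn]⟩
    have hwC : w ∈ C := ⟨x, hPmem y, by rw [hw, add_sub_cancel_left, hun]⟩
    have hCn : ∀ c ∈ C, ⟪n, c - yf⟫_ℝ ≤ 0 := by
      rintro c ⟨a, ha, hca⟩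
      have e1 : c - yf = (c - a) + (a - xf) + (xf - yf) := by abel
      rw [e1, inner_add_right, inner_add_right]
      have i1 : ⟪n, c - a⟫_ℝ ≤ 1 := by
        refine le_trans (real_inner_le_norm _ _) ?_
        rw [hnn, one_mul]; exact hca
      have i2 : ⟪n, a - xf⟫_ℝ ≤ 0 := hnA a ha
      have i3 : ⟪n, xf - yf⟫_ℝ = -1 := by
        rw [show xf - yf = -n by rw [hyf]; abel, inner_neg_right,
          real_inner_self_eq_norm_sq, hnn]
        norm_num
      linarith
    have hCu : ∀ c ∈ C, ⟪u, c - w⟫_ℝ ≤ 0 := by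
      rintro c ⟨a, ha, hca⟩
      have e1 : c - w = (c - a) + (a - x) + (x - w) := by abel
      rw [e1, inner_add_right, inner_add_right]
      have i1 : ⟪u, c - a⟫_ℝ ≤ 1 := by
        refine le_trans (real_inner_le_norm _ _) ?_
        rw [hun, one_mul]; exact hca
      have i2 : ⟪u, a - x⟫_ℝ ≤ 0 := huA a ha
      have i3 : ⟪u, x - w⟫_ℝ = -1 := by
        rw [show x - w = -u by rw [hw]; abel, inner_neg_right,
          real_inner_self_eq_norm_sq, hun]
        norm_num
      linarith
    have hyC : ∀ c ∈ C, ⟪f - yf, c - yf⟫_ℝ ≤ 0 := by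
      intro c hc
      have e1 : f - yf = (D - 1) • n := by
        rw [hyf, hn, smul_smul, show (D - 1) * D⁻¹ = 1 - D⁻¹ by field_simp,
          sub_smul, one_smul]
        abel
      rw [e1, real_inner_smul_left]
      exact mul_nonpos_of_nonneg_of_nonpos (by linarith) (hCn c hc)
    have hzC : ∀ c ∈ C, ⟪v - w, c - w⟫_ℝ ≤ 0 := by
      intro c hc
      have e1 : v - w = s • u := by rw [hv]; abel
      rw [e1, real_inner_smul_left]
      exact mul_nonpos_of_nonneg_of_nonpos hsmem.1 (hCu c hc)
    have K1 := aux_dist hyfC hwC hyC hzC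
    have hfvn : ‖f - v‖ ≤ δ := by
      rw [← dist_eq_norm, dist_comm]; exact hfv.le
    have hyfw : ‖yf - w‖ ≤ δ := le_trans K1.1 hfvn
    have hyA2 : ∀ a ∈ A, ⟪yf - xf, a - xf⟫_ℝ ≤ 0 := by
      intro a ha
      rw [show yf - xf = n by rw [hyf]; abel]
      exact hnA a ha
    have hzA2 : ∀ a ∈ A, ⟪w - x, a - x⟫_ℝ ≤ 0 := by
      intro a ha; rw [hwx]; exact huA a ha
    have K2 := aux_dist (hPmem f) (hPmem y) hyA2 hzA2
    have hxfx : ‖xf - x‖ ≤ δ := le_trans K2.1 hyfw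
    have hnu : ‖n - u‖ ≤ δ := by
      have heq : (yf - xf) - (w - x) = n - u := by rw [hyf, hw]; abel
      calc ‖n - u‖ = ‖(yf - xf) - (w - x)‖ := by rw [heq]
        _ ≤ ‖yf - w‖ := K2.2
        _ ≤ δ := hyfw
    -- use the halfspace constraint at index of f
    have hconstr : ⟪n, y⟫_ℝ ≤ ⟪n, xf⟫_ℝ := by
      have hcc := hy (e ⟨f, hfF⟩)
      simp only [Equiv.symm_apply_apply] at hcc
      exact hcc
    have hfinal : t * ⟪n, u⟫_ℝ + ⟪n, x - xf⟫_ℝ ≤ 0 := by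
      have h1 : ⟪n, y - xf⟫_ℝ ≤ 0 := by
        rw [inner_sub_right]; linarith
      have htu : t • u = y - x := by
        rw [hu, smul_smul, mul_inv_cancel₀ ht0.ne', one_smul]
      have h2 : y - xf = t • u + (x - xf) := by rw [htu]; abel
      rw [h2, inner_add_right, real_inner_smul_right] at h1
      exact h1
    have hnu2 : (1:ℝ) - δ^2/2 ≤ ⟪n, u⟫_ℝ := by
      have hexp : ‖n - u‖^2 = ‖n‖^2 - 2*⟪n,u⟫_ℝ + ‖u‖^2 := norm_sub_sq_real _ _
      rw [hnn, hun] at hexp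
      have hsq : ‖n - u‖^2 ≤ δ^2 := pow_le_pow_left₀ (norm_nonneg _) hnu 2
      linarith
    have hsplit : ⟪n, xf - x⟫_ℝ = ⟪n - u, xf - x⟫_ℝ + ⟪u, xf - x⟫_ℝ := by
      rw [inner_sub_left]; ring
    have hb1 : ⟪n - u, xf - x⟫_ℝ ≤ δ^2 := by
      refine le_trans (real_inner_le_norm _ _) ?_
      calc ‖n - u‖ * ‖xf - x‖ ≤ δ * δ := mul_le_mul hnu hxfx (norm_nonneg _) hδ0.le
        _ = δ^2 := by ring
    have hb2 : ⟪u, xf - x⟫_ℝ ≤ 0 := huA xf (hPmem f)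
    have hfin2 : t * (1 - δ^2/2) ≤ δ^2 := by
      have hxx : ⟪n, x - xf⟫_ℝ = -⟪n, xf - x⟫_ℝ := by
        rw [show x - xf = -(xf - x) by abel, inner_neg_right]
      have htb : t * ⟪n, u⟫_ℝ ≤ δ^2 := by
        rw [hxx, hsplit] at hfinal
        linarith
      have hmm := mul_le_mul_of_nonneg_left hnu2 ht0.le
      linarith
    refine ⟨x, hPmem y, ?_⟩
    have h79 : (7:ℝ)/9 ≤ 1 - δ^2/2 := by rw [hδsq]; linarith
    have hfin3 : t * (7/9) ≤ δ^2 :=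
      le_trans (mul_le_mul_of_nonneg_left h79 ht0.le) hfin2
    rw [hδsq] at hfin3
    have : t ≤ ε := by linarith
    exact this
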